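/- arXiv:1405.0368 — 3 statements merged into one kernel-verified Lean document; each statement's English description precedes it below -/
import Mathlib

section
/- Let $p \in (1,\infty)$ and $\gamma, \delta \in \mathbb{C}$. For $x \in \mathbb{R}$ set $x_\gamma = \pi(x + i/p + i\gamma)$, $x_\delta = \pi(x + i/p + i\delta)$, $s_\gamma(x) = \coth(x_\gamma)$, $r_\gamma(x) = 1/\sinh(x_\gamma)$, $p_\gamma^\pm(x) = (1 \pm s_\gamma(x))/2$. Then for all real $x$ with $\sinh(x_\gamma)\neq 0$ and $\sinh(x_\delta)\neq 0$: $p_\gamma^-(x)\, p_\delta^+(x) = -\frac{e^{i\pi(\delta - \gamma)}}{4}\, r_\gamma(x)\, r_\delta(x)$. -/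
open Complex Real

theorem proj_symbol_minus_plus (p : ℝ) (hp : 1 < p) (γ δ : ℂ) (x : ℝ)
    (xγ : ℂ) (hxγ : xγ = (Real.pi : ℂ) * (x + Complex.I / p + Complex.I * γ))
    (xδ : ℂ) (hxδ : xδ = (Real.pi : ℂ) * (x + Complex.I / p + Complex.I * δ))
    (hγ : Complex.sinh xγ ≠ 0) (hδ : Complex.sinh xδ ≠ 0) :
    ((1 - Complex.cosh xγ / Complex.sinh xγ) / 2)
      * ((1 + Complex.cosh xδ / Complex.sinh xδ) / 2)
    = -(Complex.exp (Complex.I * (Real.pi : ℂ) * (δ - γ)) / 4)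
        * (1 / Complex.sinh xγ) * (1 / Complex.sinh xδ) := by
  have key : Complex.exp (Complex.I * (Real.pi : ℂ) * (δ - γ))
      = Complex.exp xδ * Complex.exp (-xγ) := by
    rw [← Complex.exp_add]
    congr 1
    rw [hxγ, hxδ]; ring
  have hsc : Complex.sinh xγ - Complex.cosh xγ = -Complex.exp (-xγ) := by
    have := Complex.cosh_sub_sinh xγ
    linear_combination -this
  have hsc2 : Complex.sinh xδ + Complex.cosh xδ = Complex.exp xδ := by
    have := Complex.cosh_add_sinh xδ
    linear_combination this
  have h1 : (1 : ℂ) - Complex.cosh xγ / Complex.sinh xγ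
      = -Complex.exp (-xγ) / Complex.sinh xγ := by
    field_simp
    exact hsc
  have h2 : (1 : ℂ) + Complex.cosh xδ / Complex.sinh xδ
      = Complex.exp xδ / Complex.sinh xδ := by
    field_simp
    exact hsc2
  rw [h1, h2, key]
  field_simp
  ring
end

section
/- Let $p \in (1,\infty)$, $\gamma \in \mathbb{C}$ with $0 < 1/p + \operatorname{Re}\gamma < 1$, $\omega : \mathbb{R}_+ \to \mathbb{R}$, $t \in \mathbb{R}_+$, $x \in \mathbb{R}$, and $\theta \in [0,1]$. Define $r_\gamma(x) = 1/\sinh[\pi(x+i/p+i\gamma)]$ and $\tilde{\mathfrak{g}}(t,x,\theta) = 1 + \tfrac14[e^{2\pi\operatorname{Im}\gamma}(1 - e^{-i\theta\omega(t)x}) + e^{-2\pi\operatorname{Im}\gamma}(1 - e^{i\theta\omega(t)x})] r_\gamma(x) r_{\bar\gamma}(x)$. Then $\tilde{\mathfrak{g}}(t,x,\theta) = \dfrac{\sinh[\pi(x - \operatorname{Im}\gamma + i/p + i\operatorname{Re}\gamma) + i\theta\omega(t)x/2]}{\sinh[\pi(x - \operatorname{Im}\gamma + i/p + i\operatorname{Re}\gamma)]}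 \cdot \dfrac{\sinh[\pi(x + \operatorname{Im}\gamma + i/p + i\operatorname{Re}\gamma) - i\theta\omega(t)x/2]}{\sinh[\pi(x + \operatorname{Im}\gamma + i/p + i\operatorname{Re}\gamma)]}$. -/
open Complex Real

lemma sinh_mul_sinh' (X Y : ℂ) :
    Complex.sinh X * Complex.sinh Y = (Complex.cosh (X+Y) - Complex.cosh (X-Y))/2 := by
  rw [Complex.cosh_add, Complex.cosh_sub]; ring

lemma key_factor (a b u : ℂ) (ha : Complex.sinh a ≠ 0) (hb : Complex.sinh b ≠ 0) :
    1 + (1/4) * (Complex.exp (b - a) * (1 - Complex.exp (-(2*u)))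
      + Complex.exp (a - b) * (1 - Complex.exp (2*u))) * (1 / Complex.sinh a) * (1 / Complex.sinh b)
    = (Complex.sinh (a + u) / Complex.sinh a) * (Complex.sinh (b - u) / Complex.sinh b) := by
  have e1 : Complex.exp (b - a) = Complex.cosh (a-b) - Complex.sinh (a-b) := by
    rw [Complex.cosh_sub_sinh, neg_sub]
  have e2 : Complex.exp (a - b) = Complex.cosh (a-b) + Complex.sinh (a-b) :=
    (Complex.cosh_add_sinh _).symm
  have e3 : Complex.exp (2*u) = Complex.cosh (2*u) + Complex.sinh (2*u) :=
    (Complex.cosh_add_sinh _).symm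
  have e4 : Complex.exp (-(2*u)) = Complex.cosh (2*u) - Complex.sinh (2*u) :=
    (Complex.cosh_sub_sinh _).symm
  have hkey : Complex.sinh (a+u) * Complex.sinh (b-u) = Complex.sinh a * Complex.sinh b
      + (1/4) * (Complex.exp (b - a) * (1 - Complex.exp (-(2*u)))
        + Complex.exp (a - b) * (1 - Complex.exp (2*u))) := by
    rw [e1, e2, e3, e4, sinh_mul_sinh', sinh_mul_sinh',
      show (a+u)+(b-u) = a+b by ring, show (a+u)-(b-u) = (a-b)+2*u by ring,
      Complex.cosh_add (a-b) (2*u)]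
    ring
  rw [div_mul_div_comm, hkey]
  field_simp

lemma sinh_ne_zero_of_im (z : ℂ) (h0 : 0 < z.im) (h1 : z.im < Real.pi) :
    Complex.sinh z ≠ 0 := by
  intro h
  have hsin : Complex.sin (z * Complex.I) = 0 := by
    rw [Complex.sin_mul_I, h, zero_mul]
  rw [Complex.sin_eq_zero_iff] at hsin
  obtain ⟨k, hk⟩ := hsin
  have him : -z.im = (k:ℝ) * Real.pi := by
    have := congrArg Complex.re hk
    simpa [Complex.mul_re] using this
  have hπ := Real.pi_pos
  have hk1 : (k:ℝ) < 0 := by nlinarith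
  have hk2 : (-1:ℝ) < k := by nlinarith
  have hk1' : k < 0 := by exact_mod_cast hk1
  have hk2' : (-1:ℤ) < k := by exact_mod_cast hk2
  omega

theorem symbol_factorization (p : ℝ) (hp : 1 < p) (γ : ℂ)
    (h1 : 0 < 1 / p + γ.re) (h2 : 1 / p + γ.re < 1)
    (ω : ℝ → ℝ) (t : ℝ) (ht : 0 < t) (x : ℝ) (θ : ℝ) (hθ : θ ∈ Set.Icc (0:ℝ) 1) :
    1 + (1 / 4) * (Complex.exp (2 * (Real.pi : ℂ) * γ.im)
            * (1 - Complex.exp (-(Complex.I * (θ : ℂ) * (ω t : ℂ) * (x : ℂ))))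
          + Complex.exp (-(2 * (Real.pi : ℂ) * γ.im))
            * (1 - Complex.exp (Complex.I * (θ : ℂ) * (ω t : ℂ) * (x : ℂ))))
        * (1 / Complex.sinh ((Real.pi : ℂ) * (x + Complex.I / p + Complex.I * γ)))
        * (1 / Complex.sinh ((Real.pi : ℂ) * (x + Complex.I / p + Complex.I * (starRingEnd ℂ γ))))
    = (Complex.sinh ((Real.pi : ℂ) * ((x : ℂ) - (γ.im : ℂ) + Complex.I / p + Complex.I * γ.re)
          + Complex.I * (θ : ℂ) * (ω t : ℂ) * (x : ℂ) / 2)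
        / Complex.sinh ((Real.pi : ℂ) * ((x : ℂ) - (γ.im : ℂ) + Complex.I / p + Complex.I * γ.re)))
      * (Complex.sinh ((Real.pi : ℂ) * ((x : ℂ) + (γ.im : ℂ) + Complex.I / p + Complex.I * γ.re)
          - Complex.I * (θ : ℂ) * (ω t : ℂ) * (x : ℂ) / 2)
        / Complex.sinh ((Real.pi : ℂ) * ((x : ℂ) + (γ.im : ℂ) + Complex.I / p + Complex.I * γ.re))) := by
  set a : ℂ := (Real.pi : ℂ) * ((x : ℂ) - (γ.im : ℂ) + Complex.I / p + Complex.I * γ.re) with ha_def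
  set b : ℂ := (Real.pi : ℂ) * ((x : ℂ) + (γ.im : ℂ) + Complex.I / p + Complex.I * γ.re) with hb_def
  set u : ℂ := Complex.I * (θ : ℂ) * (ω t : ℂ) * (x : ℂ) / 2 with hu_def
  have hγ : (γ : ℂ) = (γ.re : ℂ) + (γ.im : ℂ) * Complex.I := (Complex.re_add_im γ).symm
  have hγc : (starRingEnd ℂ γ) = (γ.re : ℂ) - (γ.im : ℂ) * Complex.I := by
    simp [Complex.ext_iff]
  have hp0 : (0:ℝ) < p := lt_trans one_pos hp
  have hπ := Real.pi_pos
  have haim : a.im = Real.pi * (1/p + γ.re) := by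
    simp [ha_def, Complex.mul_im, Complex.add_im, Complex.div_im, Complex.I_im, Complex.I_re,
      Complex.ofReal_re, Complex.ofReal_im, Complex.normSq]
  have hbim : b.im = Real.pi * (1/p + γ.re) := by
    simp [hb_def, Complex.mul_im, Complex.add_im, Complex.div_im, Complex.I_im, Complex.I_re,
      Complex.ofReal_re, Complex.ofReal_im, Complex.normSq]
  have him0 : 0 < Real.pi * (1/p + γ.re) := by positivity
  have him1 : Real.pi * (1/p + γ.re) < Real.pi := by nlinarith
  have hsa : Complex.sinh a ≠ 0 := sinh_ne_zero_of_im a (haim ▸ him0) (haim ▸ him1)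
  have hsb : Complex.sinh b ≠ 0 := sinh_ne_zero_of_im b (hbim ▸ him0) (hbim ▸ him1)
  have e1 : (Real.pi : ℂ) * (x + Complex.I / p + Complex.I * γ) = a := by
    rw [hγ, ha_def]
    linear_combination ((Real.pi : ℂ) * γ.im) * Complex.I_sq
  have e2 : (Real.pi : ℂ) * (x + Complex.I / p + Complex.I * (starRingEnd ℂ γ)) = b := by
    rw [hγc, hb_def]
    linear_combination (-(Real.pi : ℂ) * γ.im) * Complex.I_sq
  have e3 : (2 * (Real.pi : ℂ) * γ.im) = b - a := by rw [ha_def, hb_def]; ring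
  have e4 : (Complex.I * (θ : ℂ) * (ω t : ℂ) * (x : ℂ)) = 2 * u := by rw [hu_def]; ring
  rw [e1, e2, e3, e4, show -(b-a) = a - b from neg_sub b a]
  exact key_factor a b u hsa hsb
end

section
/- Let $p \in (1,\infty)$, $\gamma \in \mathbb{C}$ with $0 < 1/p + \operatorname{Re}\gamma < 1$, and let $\omega : \mathbb{R}_+ \to \mathbb{R}$ be a bounded function satisfying $0 < \frac1p + \operatorname{Re}\gamma + \frac{1}{2\pi}\inf_{t}(\omega(t)\operatorname{Im}\gamma)$ and $\frac1p + \operatorname{Re}\gamma + \frac{1}{2\pi}\sup_{t}(\omega(t)\operatorname{Im}\gamma) < 1$. Define for $(t,x,\theta) \in \mathbb{R}_+ \times \mathbb{R} \times [0,1]$: $\tilde{\mathfrak{g}}(t,x,\theta) = 1 + \tfrac14[e^{2\pi\operatorname{Im}\gamma}(1 - e^{-i\theta\omega(t)x}) + e^{-2\pi\operatorname{Im}\gamma}(1 - e^{i\theta\omega(t)x})]\, r_\gamma(x) r_{\bar\gamma}(x)$, where $r_\gamma(x) = 1/\sinh[\pi(x+i/p+i\gamma)]$. Then there exists a constant $c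 > 0$, depending only on $p$, $\gamma$, and $\omega$, such that $|\tilde{\mathfrak{g}}(t,x,\theta)| \geq c$ for all $(t,x,\theta) \in \mathbb{R}_+ \times \mathbb{R} \times [0,1]$. -/
open Complex Real

lemma csinh_eq (z : ℂ) : Complex.sinh z = (Complex.exp z - Complex.exp (-z)) / 2 := rfl

lemma abs_sinh_sq' (s t : ℝ) :
    Norm.norm (Complex.sinh ((s:ℂ) + (t:ℂ) * Complex.I)) ^ 2
      = Real.sinh s ^ 2 + Real.sin t ^ 2 := by
  have h : Complex.sinh ((s:ℂ) + (t:ℂ)*I)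
      = ((Real.sinh s * Real.cos t : ℝ) : ℂ) + ((Real.cosh s * Real.sin t : ℝ) : ℂ) * I := by
    rw [Complex.sinh_add, Complex.sinh_mul_I, Complex.cosh_mul_I]
    push_cast
    ring
  rw [h, Complex.sq_norm, Complex.normSq_add_mul_I]
  linear_combination Real.sinh s ^ 2 * Real.sin_sq_add_cos_sq t + Real.sin t ^ 2 * Real.cosh_sq s

lemma abstract_identity (X B C F : ℂ) (hX : X ≠ 0) (hB : B ≠ 0) (hC : C ≠ 0) (hF : F ≠ 0) :
    ((X*B⁻¹*C - (X*B⁻¹*C)⁻¹)/2) * ((X*B*C - (X*B*C)⁻¹)/2)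
      + 1/4 * (B*B*(1 - (F*F)⁻¹) + (B*B)⁻¹*(1 - F*F))
    = ((X*B*(C*F⁻¹) - (X*B*(C*F⁻¹))⁻¹)/2) * ((X*B⁻¹*(C*F) - (X*B⁻¹*(C*F))⁻¹)/2) := by
  have e1 : X*B⁻¹*C - (X*B⁻¹*C)⁻¹ = (X^2*C^2 - B^2)/(X*B*C) := by
    field_simp
  have e2 : X*B*C - (X*B*C)⁻¹ = (X^2*B^2*C^2 - 1)/(X*B*C) := by
    field_simp
  have e3 : X*B*(C*F⁻¹) - (X*B*(C*F⁻¹))⁻¹ = (X^2*B^2*C^2 - F^2)/(X*B*C*F) := by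
    field_simp
  have e4 : X*B⁻¹*(C*F) - (X*B⁻¹*(C*F))⁻¹ = (X^2*C^2*F^2 - B^2)/(X*B*C*F) := by
    field_simp
  have e5 : B*B*(1 - (F*F)⁻¹) + (B*B)⁻¹*(1 - F*F) = (F^2-1)*(B^4-F^2)/(B^2*F^2) := by
    field_simp; ring
  have h4 : (4:ℂ) ≠ 0 := by norm_num
  have h2' : (2:ℂ) ≠ 0 := by norm_num
  have hXBC : X*B*C ≠ 0 := mul_ne_zero (mul_ne_zero hX hB) hC
  have hD : (4*(X^2*B^2*C^2*F^2) : ℂ) ≠ 0 :=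
    mul_ne_zero h4 (mul_ne_zero (mul_ne_zero (mul_ne_zero (pow_ne_zero 2 hX) (pow_ne_zero 2 hB)) (pow_ne_zero 2 hC)) (pow_ne_zero 2 hF))
  have hd1 : (X*B*C*2)*(X*B*C*2) ≠ 0 := mul_ne_zero (mul_ne_zero hXBC h2') (mul_ne_zero hXBC h2')
  have hd3 : (X*B*C*F*2)*(X*B*C*F*2) ≠ 0 :=
    mul_ne_zero (mul_ne_zero (mul_ne_zero hXBC hF) h2') (mul_ne_zero (mul_ne_zero hXBC hF) h2')
  have hd5 : (4*(B^2*F^2) : ℂ) ≠ 0 := mul_ne_zero h4 (mul_ne_zero (pow_ne_zero 2 hB) (pow_ne_zero 2 hF))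
  rw [e1, e2, e3, e4, e5]
  rw [div_div, div_div, div_div, div_div, div_mul_div_comm, div_mul_div_comm,
    div_mul_div_comm, one_mul]
  have h1 : (X^2*C^2 - B^2)*(X^2*B^2*C^2 - 1)/((X*B*C*2)*(X*B*C*2))
      = ((X^2*C^2 - B^2)*(X^2*B^2*C^2 - 1)*F^2)/(4*(X^2*B^2*C^2*F^2)) := by
    rw [div_eq_div_iff hd1 hD]; ring
  have h2 : (F^2-1)*(B^4-F^2)/(4*(B^2*F^2))
      = ((F^2-1)*(B^4-F^2)*(X^2*C^2))/(4*(X^2*B^2*C^2*F^2)) := by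
    rw [div_eq_div_iff hd5 hD]; ring
  have h3 : (X^2*B^2*C^2 - F^2)*(X^2*C^2*F^2 - B^2)/((X*B*C*F*2)*(X*B*C*F*2))
      = ((X^2*B^2*C^2 - F^2)*(X^2*C^2*F^2 - B^2))/(4*(X^2*B^2*C^2*F^2)) := by
    rw [div_eq_div_iff hd3 hD]; ring
  rw [h1, h2, h3, ← add_div]
  congr 1
  ring

lemma theta_mul_lb (θ v : ℝ) (h1 : θ ≤ 1) (hv : v ≤ 0) : v ≤ θ * v := by nlinarith

lemma theta_mul_ub (θ v : ℝ) (h1 : θ ≤ 1) (hv : 0 ≤ v) : θ * v ≤ v := by nlinarith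

lemma real_key (L U M₀ : ℝ) (hL : 0 < L) (hU : U < 1) (hLU : L ≤ U) (hM0 : 0 ≤ M₀) :
    ∃ d : ℝ, 0 < d ∧ ∀ y ψ κ : ℝ, L ≤ κ → κ ≤ U → |ψ - π * κ| ≤ M₀ * |y| / 2 →
      d ^ 2 * Real.cosh (π * y) ^ 2 ≤ Real.sinh (π * y) ^ 2 + Real.sin ψ ^ 2 := by
  have hπ := Real.pi_pos
  set η := π * min L (1 - U) / 2 with hη_def
  have hmin : 0 < min L (1 - U) := lt_min hL (by linarith)
  have hmin1 : min L (1 - U) ≤ 1 := le_trans (min_le_left _ _) (by linarith)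
  have hη : 0 < η := by rw [hη_def]; positivity
  have hη2 : η ≤ π / 2 := by rw [hη_def]; nlinarith
  have h2ηL : 2 * η ≤ π * L := by rw [hη_def]; nlinarith [min_le_left L (1 - U)]
  have h2ηU : π * U ≤ π - 2 * η := by
    rw [hη_def]; nlinarith [min_le_right L (1 - U)]
  set δ := η / (M₀ + 1) with hδ_def
  have hδ : 0 < δ := by positivity
  have hMδ : M₀ * δ ≤ η := by
    rw [hδ_def]
    rw [div_eq_mul_inv, ← mul_assoc]
    have h1 : M₀ * η ≤ (M₀ + 1) * η := by nlinarith
    calc M₀ * η * (M₀ + 1)⁻¹ ≤ (M₀ + 1) * η * (M₀ + 1)⁻¹ := by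
          apply mul_le_mul_of_nonneg_right h1; positivity
      _ = η := by field_simp
  have hcosh1 : 1 < Real.cosh (π * δ) := Real.one_lt_cosh.2 (by positivity)
  have hsinη : 0 < Real.sin η := Real.sin_pos_of_pos_of_lt_pi hη (by linarith)
  set D := Real.cosh (π * δ) ^ 2 with hD_def
  have hD1 : 1 < D := by nlinarith
  set c1 := 1 - 1 / D with hc1_def
  set c2 := Real.sin η ^ 2 / D with hc2_def
  have hc1 : 0 < c1 := by
    rw [hc1_def]
    have : 1 / D < 1 := by rw [div_lt_one (by linarith)]; exact hD1
    linarith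
  have hc2 : 0 < c2 := by rw [hc2_def]; positivity
  clear_value η δ D c1 c2
  refine ⟨Real.sqrt (min c1 c2), Real.sqrt_pos.2 (lt_min hc1 hc2), ?_⟩
  intro y ψ κ hκ1 hκ2 hψ
  rw [Real.sq_sqrt (le_of_lt (lt_min hc1 hc2))]
  rcases le_or_gt δ |y| with hy | hy
  · -- large |y|
    have hcc : Real.cosh (π * δ) ≤ Real.cosh (π * y) := by
      rw [Real.cosh_le_cosh, abs_mul, abs_mul, abs_of_pos hπ, abs_of_pos hδ]
      exact mul_le_mul_of_nonneg_left hy hπ.le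
    have hD2 : D ≤ Real.cosh (π * y) ^ 2 := by
      rw [hD_def]
      exact pow_le_pow_left₀ (Real.cosh_pos _).le hcc 2
    have hone : 1 ≤ Real.cosh (π * y) ^ 2 / D := (one_le_div (by linarith)).2 hD2
    have hexp : c1 * Real.cosh (π * y) ^ 2
        = Real.cosh (π * y) ^ 2 - Real.cosh (π * y) ^ 2 / D := by
      rw [hc1_def]; field_simp
    have hs : Real.sinh (π * y) ^ 2 = Real.cosh (π * y) ^ 2 - 1 := Real.sinh_sq _
    have : min c1 c2 * Real.cosh (π * y) ^ 2 ≤ c1 * Real.cosh (π * y) ^ 2 :=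
      mul_le_mul_of_nonneg_right (min_le_left _ _) (by positivity)
    calc (min c1 c2) * Real.cosh (π * y) ^ 2 ≤ c1 * Real.cosh (π * y) ^ 2 := this
      _ ≤ Real.cosh (π * y) ^ 2 - 1 := by linarith
      _ ≤ Real.sinh (π * y) ^ 2 + Real.sin ψ ^ 2 := by nlinarith [sq_nonneg (Real.sin ψ)]
  · -- small |y|
    have hcc : Real.cosh (π * y) ≤ Real.cosh (π * δ) := by
      rw [Real.cosh_le_cosh, abs_mul, abs_mul, abs_of_pos hπ, abs_of_pos hδ]
      exact mul_le_mul_of_nonneg_left hy.le hπ.le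
    have hD2 : Real.cosh (π * y) ^ 2 ≤ D := by
      rw [hD_def]; exact pow_le_pow_left₀ (Real.cosh_pos _).le hcc 2
    have hψη : |ψ - π * κ| ≤ η / 2 := by
      calc |ψ - π * κ| ≤ M₀ * |y| / 2 := hψ
        _ ≤ M₀ * δ / 2 := by
            have := mul_le_mul_of_nonneg_left hy.le hM0
            linarith
        _ ≤ η / 2 := by linarith
    have hb := abs_le.1 hψη
    have hκL' : π * L ≤ π * κ := mul_le_mul_of_nonneg_left hκ1 hπ.le
    have hκU' : π * κ ≤ π * U := mul_le_mul_of_nonneg_left hκ2 hπ.le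
    have hψlb : η ≤ ψ := by linarith
    have hψub : ψ ≤ π - η := by linarith
    have hsin : Real.sin η ≤ Real.sin ψ := by
      have hmono := Real.strictMonoOn_sin.monotoneOn
      rcases le_total ψ (π / 2) with h | h
      · exact hmono ⟨by linarith, hη2⟩ ⟨by linarith, h⟩ hψlb
      · calc Real.sin η ≤ Real.sin (π - ψ) := by
              apply hmono ⟨by linarith, hη2⟩ ⟨by linarith, by linarith⟩ (by linarith)
          _ = Real.sin ψ := Real.sin_pi_sub ψ
    have hsin2 : Real.sin η ^ 2 ≤ Real.sin ψ ^ 2 := pow_le_pow_left₀ hsinη.le hsin 2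
    have h1 : min c1 c2 * Real.cosh (π * y) ^ 2 ≤ c2 * D :=
      mul_le_mul (min_le_right _ _) hD2 (by positivity) hc2.le
    have h2 : c2 * D = Real.sin η ^ 2 := by
      rw [hc2_def]; field_simp
    linarith [sq_nonneg (Real.sinh (π * y))]

set_option maxHeartbeats 2000000 in
theorem symbol_lower_bound (p : ℝ) (hp : 1 < p) (γ : ℂ)
    (h1 : 0 < 1 / p + γ.re) (h2 : 1 / p + γ.re < 1)
    (ω : ℝ → ℝ) (hbd : ∃ M : ℝ, ∀ t : ℝ, 0 < t → |ω t| ≤ M)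
    (hinf : 0 < 1 / p + γ.re + (⨅ t : Set.Ioi (0:ℝ), ω t * γ.im) / (2 * Real.pi))
    (hsup : 1 / p + γ.re + (⨆ t : Set.Ioi (0:ℝ), ω t * γ.im) / (2 * Real.pi) < 1) :
    ∃ c : ℝ, 0 < c ∧ ∀ t : ℝ, 0 < t → ∀ x : ℝ, ∀ θ ∈ Set.Icc (0:ℝ) 1,
      c ≤ Norm.norm
        (1 + (1 / 4) * (Complex.exp (2 * (Real.pi : ℂ) * γ.im)
              * (1 - Complex.exp (-(Complex.I * (θ : ℂ) * (ω t : ℂ) * (x : ℂ))))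
            + Complex.exp (-(2 * (Real.pi : ℂ) * γ.im))
              * (1 - Complex.exp (Complex.I * (θ : ℂ) * (ω t : ℂ) * (x : ℂ))))
          * (1 / Complex.sinh ((Real.pi : ℂ) * (x + Complex.I / p + Complex.I * γ)))
          * (1 / Complex.sinh ((Real.pi : ℂ) * (x + Complex.I / p + Complex.I * (starRingEnd ℂ γ))))) := by
  have hπ := Real.pi_pos
  have hp0 : p ≠ 0 := by linarith
  obtain ⟨M₁, hM₁⟩ := hbd
  set M₀ := max M₁ 0 with hM₀_def
  have hM0 : 0 ≤ M₀ := le_max_right _ _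
  have hω : ∀ t : ℝ, 0 < t → |ω t| ≤ M₀ := fun t ht => le_trans (hM₁ t ht) (le_max_left _ _)
  set β := 1 / p + γ.re with hβ_def
  set b := γ.im with hb_def
  have hβ1 : 0 < β := h1
  have hβ2 : β < 1 := h2
  have hbb : BddBelow (Set.range fun t : Set.Ioi (0:ℝ) => ω t * b) := by
    refine ⟨-(M₀ * |b|), ?_⟩
    rintro z ⟨t, rfl⟩
    have h := hω t t.2
    have habs : |ω ↑t * b| ≤ M₀ * |b| := by
      rw [abs_mul]; exact mul_le_mul_of_nonneg_right h (abs_nonneg b)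
    have h2 := neg_abs_le (ω (t:ℝ) * b)
    show -(M₀ * |b|) ≤ ω (t:ℝ) * b
    linarith
  have hba : BddAbove (Set.range fun t : Set.Ioi (0:ℝ) => ω t * b) := by
    refine ⟨M₀ * |b|, ?_⟩
    rintro z ⟨t, rfl⟩
    have h := hω t t.2
    have habs : |ω ↑t * b| ≤ M₀ * |b| := by
      rw [abs_mul]; exact mul_le_mul_of_nonneg_right h (abs_nonneg b)
    have h2 := le_abs_self (ω (t:ℝ) * b)
    show ω (t:ℝ) * b ≤ M₀ * |b|
    linarith
  set m := ⨅ t : Set.Ioi (0:ℝ), ω t * b with hm_def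
  set Ms := ⨆ t : Set.Ioi (0:ℝ), ω t * b with hMs_def
  set L := min β (β + m / (2 * π)) with hL_def
  set U := max β (β + Ms / (2 * π)) with hU_def
  have hL : 0 < L := lt_min hβ1 hinf
  have hU : U < 1 := max_lt hβ2 hsup
  have hLU : L ≤ U := le_trans (min_le_left _ _) (le_max_left _ _)
  have hmle : ∀ t : ℝ, 0 < t → m ≤ ω t * b := fun t ht =>
    ciInf_le hbb (⟨t, ht⟩ : Set.Ioi (0:ℝ))
  have hMge : ∀ t : ℝ, 0 < t → ω t * b ≤ Ms := fun t ht =>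
    le_ciSup hba (⟨t, ht⟩ : Set.Ioi (0:ℝ))
  have hLβ : L ≤ β := min_le_left _ _
  have hLm : L ≤ β + m / (2 * π) := min_le_right _ _
  have hUβ : β ≤ U := le_max_left _ _
  have hUM : β + Ms / (2 * π) ≤ U := le_max_right _ _
  obtain ⟨d, hd, hkey⟩ := real_key L U M₀ hL hU hLU hM0
  clear_value m Ms L U
  refine ⟨d ^ 2, by positivity, ?_⟩
  intro t ht x θ hθ
  obtain ⟨hθ0, hθ1⟩ := hθ
  set w := ω t with hw_def
  have hwM : |w| ≤ M₀ := hω t ht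
  have hmw : m ≤ w * b := hmle t ht
  have hMw : w * b ≤ Ms := hMge t ht
  set φ := θ * w * x with hφ_def
  set κ := β + θ * (w * b) / (2 * π) with hκ_def
  have h2π : (0:ℝ) < 2 * π := by linarith
  have hκL : L ≤ κ := by
    rcases le_total 0 (w * b) with h | h
    · have h0 : 0 ≤ θ * (w * b) / (2 * π) := by positivity
      calc L ≤ β := hLβ
        _ ≤ κ := by rw [hκ_def]; linarith
    · have h1' : m ≤ θ * (w * b) := le_trans hmw (theta_mul_lb θ (w * b) hθ1 h)
      have := (div_le_div_iff_of_pos_right h2π).mpr h1'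
      calc L ≤ β + m / (2 * π) := hLm
        _ ≤ κ := by rw [hκ_def]; linarith
  have hκU : κ ≤ U := by
    rcases le_total 0 (w * b) with h | h
    · have h1' : θ * (w * b) ≤ Ms := le_trans (theta_mul_ub θ (w * b) hθ1 h) hMw
      have := (div_le_div_iff_of_pos_right h2π).mpr h1'
      calc κ ≤ β + Ms / (2 * π) := by rw [hκ_def]; linarith
        _ ≤ U := hUM
    · have h0 : θ * (w * b) / (2 * π) ≤ 0 := by
        apply div_nonpos_of_nonpos_of_nonneg ?_ h2π.le
        exact mul_nonpos_of_nonneg_of_nonpos hθ0 h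
      calc κ ≤ β := by rw [hκ_def]; linarith
        _ ≤ U := hUβ
  have hπκ : π * κ = π * β + θ * (w * b) / 2 := by
    rw [hκ_def]; field_simp
  -- bound for the P factor
  have hwbound : ∀ y : ℝ, |θ * (w * y)| / 2 ≤ M₀ * |y| / 2 := by
    intro y
    have : |θ * (w * y)| ≤ M₀ * |y| := by
      rw [abs_mul, abs_mul, _root_.abs_of_nonneg hθ0]
      calc θ * (|w| * |y|) ≤ 1 * (M₀ * |y|) := by
            apply mul_le_mul hθ1 (mul_le_mul_of_nonneg_right hwM (abs_nonneg _)) (by positivity)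
              one_pos.le
        _ = M₀ * |y| := one_mul _
    linarith
  have hboundP : |(π * β - φ / 2) - π * κ| ≤ M₀ * |x + b| / 2 := by
    have heq : (π * β - φ / 2) - π * κ = -(θ * (w * (x + b))) / 2 := by
      rw [hπκ, hφ_def]; ring
    rw [heq, abs_div, abs_neg, _root_.abs_two]
    exact hwbound (x + b)
  have hboundQ : |(π * β + φ / 2) - π * κ| ≤ M₀ * |x - b| / 2 := by
    have heq : (π * β + φ / 2) - π * κ = (θ * (w * (x - b))) / 2 := by
      rw [hπκ, hφ_def]; ring
    rw [heq, abs_div, _root_.abs_two]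
    exact hwbound (x - b)
  have hP2 := hkey (x + b) (π * β - φ / 2) κ hκL hκU hboundP
  have hQ2 := hkey (x - b) (π * β + φ / 2) κ hκL hκU hboundQ
  set SP := Complex.sinh (((π * (x + b) : ℝ) : ℂ) + ((π * β - φ / 2 : ℝ) : ℂ) * I) with hSP_def
  set SQ := Complex.sinh (((π * (x - b) : ℝ) : ℂ) + ((π * β + φ / 2 : ℝ) : ℂ) * I) with hSQ_def
  set SU := Complex.sinh (((π * (x - b) : ℝ) : ℂ) + ((π * β : ℝ) : ℂ) * I) with hSU_def
  set SV := Complex.sinh (((π * (x + b) : ℝ) : ℂ) + ((π * β : ℝ) : ℂ) * I) with hSV_def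
  have hP : d * Real.cosh (π * (x + b)) ≤ Norm.norm SP := by
    apply le_of_pow_le_pow_left₀ two_ne_zero (norm_nonneg _)
    rw [hSP_def, abs_sinh_sq', mul_pow]
    exact hP2
  have hQ : d * Real.cosh (π * (x - b)) ≤ Norm.norm SQ := by
    apply le_of_pow_le_pow_left₀ two_ne_zero (norm_nonneg _)
    rw [hSQ_def, abs_sinh_sq', mul_pow]
    exact hQ2
  have hsinβ : 0 < Real.sin (π * β) := by
    apply Real.sin_pos_of_pos_of_lt_pi (by positivity)
    have := mul_lt_mul_of_pos_left hβ2 hπ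
    linarith
  have hUle : Norm.norm SU ≤ Real.cosh (π * (x - b)) := by
    apply le_of_pow_le_pow_left₀ two_ne_zero (Real.cosh_pos _).le
    rw [hSU_def, abs_sinh_sq']
    linarith [Real.sin_sq_le_one (π * β), Real.cosh_sq (π * (x - b))]
  have hVle : Norm.norm SV ≤ Real.cosh (π * (x + b)) := by
    apply le_of_pow_le_pow_left₀ two_ne_zero (Real.cosh_pos _).le
    rw [hSV_def, abs_sinh_sq']
    linarith [Real.sin_sq_le_one (π * β), Real.cosh_sq (π * (x + b))]
  have hUpos : 0 < Norm.norm SU := by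
    have hsq : 0 < Norm.norm SU ^ 2 := by
      rw [hSU_def, abs_sinh_sq']
      have := pow_pos hsinβ 2
      linarith [sq_nonneg (Real.sinh (π * (x - b)))]
    rcases (norm_nonneg SU).lt_or_eq with h | h
    · exact h
    · exfalso; rw [← h] at hsq; norm_num at hsq
  have hVpos : 0 < Norm.norm SV := by
    have hsq : 0 < Norm.norm SV ^ 2 := by
      rw [hSV_def, abs_sinh_sq']
      have := pow_pos hsinβ 2
      linarith [sq_nonneg (Real.sinh (π * (x + b)))]
    rcases (norm_nonneg SV).lt_or_eq with h | h
    · exact h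
    · exfalso; rw [← h] at hsq; norm_num at hsq
  have hSUne : SU ≠ 0 := by
    intro hz; rw [hz] at hUpos; simp at hUpos
  have hSVne : SV ≠ 0 := by
    intro hz; rw [hz] at hVpos; simp at hVpos
  -- rewrite the sinh arguments
  have hu : ((π : ℝ) : ℂ) * ((x : ℂ) + Complex.I / (p : ℂ) + Complex.I * γ)
      = ((π * (x - b) : ℝ) : ℂ) + ((π * β : ℝ) : ℂ) * Complex.I := by
    rw [hb_def, hβ_def]
    push_cast
    linear_combination (-(Real.pi:ℂ) * Complex.I) * (Complex.re_add_im γ)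
      + ((Real.pi:ℂ) * (γ.im:ℂ)) * Complex.I_sq
  have hv : ((π : ℝ) : ℂ) * ((x : ℂ) + Complex.I / (p : ℂ) + Complex.I * (starRingEnd ℂ γ))
      = ((π * (x + b) : ℝ) : ℂ) + ((π * β : ℝ) : ℂ) * Complex.I := by
    have hconj : (starRingEnd ℂ) γ = (γ.re:ℂ) - (γ.im:ℂ) * Complex.I := by
      apply Complex.ext <;> simp
    rw [hb_def, hβ_def, hconj]
    push_cast
    linear_combination (-(Real.pi:ℂ) * (γ.im:ℂ)) * Complex.I_sq
  -- exponential generators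
  set X := Complex.exp ((π * x : ℝ) : ℂ) with hX_def
  set B := Complex.exp ((π * b : ℝ) : ℂ) with hB_def
  set C := Complex.exp (((π * β : ℝ) : ℂ) * I) with hC_def
  set F := Complex.exp (((φ / 2 : ℝ) : ℂ) * I) with hF_def
  have hXne : X ≠ 0 := Complex.exp_ne_zero _
  have hBne : B ≠ 0 := Complex.exp_ne_zero _
  have hCne : C ≠ 0 := Complex.exp_ne_zero _
  have hFne : F ≠ 0 := Complex.exp_ne_zero _
  have eU : SU = (X*B⁻¹*C - (X*B⁻¹*C)⁻¹)/2 := by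
    rw [hSU_def, csinh_eq]
    have harg : (((π * (x - b) : ℝ) : ℂ) + ((π * β : ℝ) : ℂ) * I)
        = ((π * x : ℝ) : ℂ) + (-((π * b : ℝ) : ℂ)) + ((π * β : ℝ) : ℂ) * I := by
      push_cast; ring
    rw [harg]
    simp only [Complex.exp_add, Complex.exp_neg]
    rfl
  have eV : SV = (X*B*C - (X*B*C)⁻¹)/2 := by
    rw [hSV_def, csinh_eq]
    have harg : (((π * (x + b) : ℝ) : ℂ) + ((π * β : ℝ) : ℂ) * I)
        = ((π * x : ℝ) : ℂ) + ((π * b : ℝ) : ℂ) + ((π * β : ℝ) : ℂ) * I := by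
      push_cast; ring
    rw [harg]
    simp only [Complex.exp_add, Complex.exp_neg]
    rfl
  have eP : SP = (X*B*(C*F⁻¹) - (X*B*(C*F⁻¹))⁻¹)/2 := by
    rw [hSP_def, csinh_eq]
    have harg : (((π * (x + b) : ℝ) : ℂ) + ((π * β - φ / 2 : ℝ) : ℂ) * I)
        = ((π * x : ℝ) : ℂ) + ((π * b : ℝ) : ℂ)
          + (((π * β : ℝ) : ℂ) * I + -(((φ / 2 : ℝ) : ℂ) * I)) := by
      push_cast; ring
    rw [harg]
    simp only [Complex.exp_add, Complex.exp_neg]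
    rfl
  have eQ : SQ = (X*B⁻¹*(C*F) - (X*B⁻¹*(C*F))⁻¹)/2 := by
    rw [hSQ_def, csinh_eq]
    have harg : (((π * (x - b) : ℝ) : ℂ) + ((π * β + φ / 2 : ℝ) : ℂ) * I)
        = ((π * x : ℝ) : ℂ) + (-((π * b : ℝ) : ℂ))
          + (((π * β : ℝ) : ℂ) * I + ((φ / 2 : ℝ) : ℂ) * I) := by
      push_cast; ring
    rw [harg]
    simp only [Complex.exp_add, Complex.exp_neg]
    rfl
  have e5 : Complex.exp (2 * (Real.pi : ℂ) * (b : ℂ)) = B * B := by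
    rw [hB_def, ← Complex.exp_add]
    congr 1
    push_cast; ring
  have e5' : Complex.exp (-(2 * (Real.pi : ℂ) * (b : ℂ))) = (B * B)⁻¹ := by
    rw [Complex.exp_neg, e5]
  have e6 : Complex.exp (Complex.I * (θ : ℂ) * (w : ℂ) * (x : ℂ)) = F * F := by
    rw [hF_def, ← Complex.exp_add]
    congr 1
    rw [hφ_def]; push_cast; ring
  have e6' : Complex.exp (-(Complex.I * (θ : ℂ) * (w : ℂ) * (x : ℂ))) = (F * F)⁻¹ := by
    rw [Complex.exp_neg, e6]
  -- the main algebraic identity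
  have hprod : SU * SV + 1/4 * (Complex.exp (2 * (Real.pi : ℂ) * (b : ℂ))
        * (1 - Complex.exp (-(Complex.I * (θ : ℂ) * (w : ℂ) * (x : ℂ))))
      + Complex.exp (-(2 * (Real.pi : ℂ) * (b : ℂ)))
        * (1 - Complex.exp (Complex.I * (θ : ℂ) * (w : ℂ) * (x : ℂ)))) = SP * SQ := by
    rw [e5, e5', e6, e6', eU, eV, eP, eQ]
    exact abstract_identity X B C F hXne hBne hCne hFne
  have heq : (1 + (1 / 4) * (Complex.exp (2 * (Real.pi : ℂ) * (b : ℂ))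
        * (1 - Complex.exp (-(Complex.I * (θ : ℂ) * (w : ℂ) * (x : ℂ))))
      + Complex.exp (-(2 * (Real.pi : ℂ) * (b : ℂ)))
        * (1 - Complex.exp (Complex.I * (θ : ℂ) * (w : ℂ) * (x : ℂ))))
      * (1 / SU) * (1 / SV)) = SP * SQ / (SU * SV) := by
    rw [← hprod]
    field_simp
  rw [hu, hv, ← hSU_def, ← hSV_def, heq, norm_div, norm_mul, norm_mul]
  rw [le_div_iff₀ (mul_pos hUpos hVpos)]
  calc d ^ 2 * (Norm.norm SU * Norm.norm SV)
      ≤ d ^ 2 * (Real.cosh (π * (x - b)) * Real.cosh (π * (x + b))) := by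
        apply mul_le_mul_of_nonneg_left ?_ (by positivity)
        exact mul_le_mul hUle hVle (norm_nonneg _) (Real.cosh_pos _).le
    _ = (d * Real.cosh (π * (x + b))) * (d * Real.cosh (π * (x - b))) := by ring
    _ ≤ Norm.norm SP * Norm.norm SQ := by
        apply mul_le_mul hP hQ (mul_nonneg hd.le (Real.cosh_pos _).le) (norm_nonneg _)
end
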